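/- Let T > 0, L > 0, R > 0, c > 0, λ ∈ ℝ, 0 < μ < 1, and set α = 1 − μ. Let f, g : [0,T] → ℝ be measurable with 1/L ≤ f(t) ≤ g(t) for almost every t ∈ [0,T], assume f, f^α and (g/f)^{α/μ} are integrable on [0,T], and assume the average bound (1/T)∫₀ᵀ f ≤ c·L^{−1}·R^{λ}. Then (1/T)∫₀ᵀ (c·g(t)/f(t))^{(1−μ)/μ} dt ≥ (1/T)∫₀ᵀ ((L·f(t))^{μ}·R^{−λ})^{(1−μ)/μ} dt. -/

import Mathlib

open MeasureTheory

/-- the abstract content of Theorem 4.1 of the paper: if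
`1/L ≤ f ≤ g` a.e. on `[0,T]` and the average of `f` is at most `c L⁻¹ R^λ`, then
the average of `(c g/f)^((1-μ)/μ)` dominates the average of `((L f)^μ R^(-λ))^((1-μ)/μ)`. -/
theorem good_bad_average_inequality
    (T L R c lam : ℝ) (hT : 0 < T) (hL : 0 < L) (hR : 0 < R) (hc : 0 < c)
    (μ α : ℝ) (hμ0 : 0 < μ) (hμ1 : μ < 1) (hα : α = 1 - μ)
    (f g : ℝ → ℝ) (hfm : Measurable f) (hgm : Measurable g)
    (hfg : ∀ᵐ t ∂(volume.restrict (Set.Icc 0 T)), 1 / L ≤ f t ∧ f t ≤ g t)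
    (hint_f : IntegrableOn f (Set.Icc 0 T))
    (hint_fα : IntegrableOn (fun t => f t ^ α) (Set.Icc 0 T))
    (hint_r : IntegrableOn (fun t => (g t / f t) ^ (α / μ)) (Set.Icc 0 T))
    (havg : (1 / T) * ∫ t in Set.Icc 0 T, f t ≤ c * L⁻¹ * R ^ lam) :
    (1 / T) * ∫ t in Set.Icc 0 T, (c * g t / f t) ^ ((1 - μ) / μ) ≥
      (1 / T) * ∫ t in Set.Icc 0 T, ((L * f t) ^ μ * R ^ (-lam)) ^ ((1 - μ) / μ) := by
  subst hα
  set s : Set ℝ := Set.Icc 0 T with hs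
  set β : ℝ := (1 - μ) / μ with hβdef
  have hμ' : (0:ℝ) < 1 - μ := by linarith
  have hβ : 0 < β := div_pos hμ' hμ0
  have hvol : volume s = ENNReal.ofReal T := by
    rw [hs, Real.volume_Icc, sub_zero]
  have hvolT : (volume s).toReal = T := by
    rw [hvol, ENNReal.toReal_ofReal hT.le]
  have hvne : volume s ≠ 0 := by
    rw [hvol]; simpa [ENNReal.ofReal_eq_zero] using hT
  have hvtop : volume s ≠ ⊤ := by rw [hvol]; exact ENNReal.ofReal_ne_top
  have hLinv : (0:ℝ) < 1 / L := by positivity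
  -- the constant function is integrable on s
  have hconst : ∀ r : ℝ, IntegrableOn (fun _ : ℝ => r) s := fun r =>
    integrableOn_const hvtop
  -- Step 1 : lower bound on the integral of f
  have hTL : T * (1 / L) ≤ ∫ t in s, f t := by
    have h := integral_mono_ae (hconst (1 / L)) hint_f (hfg.mono fun t ht => ht.1)
    rwa [setIntegral_const, measureReal_def, hvolT, smul_eq_mul] at h
  -- Step 2 : 1 ≤ c R^lam
  have h1 : 1 ≤ c * R ^ lam := by
    have h2 : 1 / L ≤ c * L⁻¹ * R ^ lam := by
      calc 1 / L = (1 / T) * (T * (1 / L)) := by field_simp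
        _ ≤ (1 / T) * ∫ t in s, f t :=
            mul_le_mul_of_nonneg_left hTL (by positivity)
        _ ≤ c * L⁻¹ * R ^ lam := havg
    calc (1:ℝ) = L * (1 / L) := by field_simp
      _ ≤ L * (c * L⁻¹ * R ^ lam) := mul_le_mul_of_nonneg_left h2 hL.le
      _ = c * R ^ lam := by field_simp
  -- Step 3 : lower bound for the LHS
  have hae_l : (fun t => (c * g t / f t) ^ β)
      =ᵐ[volume.restrict s] fun t => c ^ β * (g t / f t) ^ β := by
    filter_upwards [hfg] with t ht
    have hf0 : 0 < f t := lt_of_lt_of_le hLinv ht.1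
    rw [mul_div_assoc, Real.mul_rpow hc.le (div_nonneg (hf0.le.trans ht.2) hf0.le)]
  have hint_l : IntegrableOn (fun t => (c * g t / f t) ^ β) s :=
    (hint_r.const_mul (c ^ β)).congr hae_l.symm
  have hLHS : T * c ^ β ≤ ∫ t in s, (c * g t / f t) ^ β := by
    have hmono : (fun _ : ℝ => c ^ β)
        ≤ᵐ[volume.restrict s] fun t => (c * g t / f t) ^ β := by
      filter_upwards [hfg] with t ht
      have hf0 : 0 < f t := lt_of_lt_of_le hLinv ht.1
      have hcle : c ≤ c * g t / f t := by
        rw [mul_div_assoc]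
        exact le_mul_of_one_le_right hc.le ((one_le_div hf0).2 ht.2)
      exact Real.rpow_le_rpow hc.le hcle hβ.le
    have h := integral_mono_ae (hconst (c ^ β)) hint_l hmono
    rwa [setIntegral_const, measureReal_def, hvolT, smul_eq_mul] at h
  -- Step 4 : Jensen for the concave power
  have hconc : ConcaveOn ℝ (Set.Ici (0:ℝ)) (fun x : ℝ => x ^ (1 - μ)) :=
    Real.concaveOn_rpow hμ'.le (by linarith)
  have hcont : ContinuousOn (fun x : ℝ => x ^ (1 - μ)) (Set.Ici 0) := fun x _ =>
    (Real.continuousAt_rpow_const x (1 - μ) (Or.inr hμ'.le)).continuousWithinAt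
  have hfs : ∀ᵐ t ∂(volume.restrict s), f t ∈ Set.Ici (0:ℝ) :=
    hfg.mono fun t ht => le_trans hLinv.le ht.1
  have hjensen :
      (⨍ t in s, f t ^ (1 - μ)) ≤ (⨍ t in s, f t) ^ (1 - μ) := by
    have := hconc.le_map_set_average hcont isClosed_Ici hvne hvtop hfs hint_f
      (by simpa [Function.comp_def] using hint_fα)
    simpa using this
  have havg' : ⨍ t in s, f t ≤ c * L⁻¹ * R ^ lam := by
    rw [setAverage_eq, measureReal_def, hvolT, smul_eq_mul]
    rwa [one_div] at havg
  have havg0 : 0 ≤ ⨍ t in s, f t := by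
    rw [setAverage_eq, smul_eq_mul]
    have h0 : 0 ≤ ∫ t in s, f t := le_trans (by positivity) hTL
    positivity
  have hJ : ∫ t in s, f t ^ (1 - μ) ≤ T * (c * L⁻¹ * R ^ lam) ^ (1 - μ) := by
    have h2 : ⨍ t in s, f t ^ (1 - μ) ≤ (c * L⁻¹ * R ^ lam) ^ (1 - μ) :=
      le_trans hjensen (Real.rpow_le_rpow havg0 havg' hμ'.le)
    rw [setAverage_eq, measureReal_def, hvolT, smul_eq_mul] at h2
    calc ∫ t in s, f t ^ (1 - μ) = T * (T⁻¹ * ∫ t in s, f t ^ (1 - μ)) := by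
          field_simp
      _ ≤ T * (c * L⁻¹ * R ^ lam) ^ (1 - μ) :=
          mul_le_mul_of_nonneg_left h2 hT.le
  -- Step 5 : rewrite the RHS integrand
  have hμβ : μ * β = 1 - μ := by
    rw [hβdef]; field_simp
  have hae_r : (fun t => ((L * f t) ^ μ * R ^ (-lam)) ^ β)
      =ᵐ[volume.restrict s]
      fun t => (L ^ (1 - μ) * R ^ (-lam * β)) * f t ^ (1 - μ) := by
    filter_upwards [hfg] with t ht
    have hf0 : 0 < f t := lt_of_lt_of_le hLinv ht.1
    have hLf : (0:ℝ) ≤ L * f t := by positivity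
    rw [Real.mul_rpow (Real.rpow_nonneg hLf μ) (Real.rpow_nonneg hR.le _),
      ← Real.rpow_mul hLf, ← Real.rpow_mul hR.le, hμβ,
      Real.mul_rpow hL.le hf0.le]
    ring
  have hRHS : ∫ t in s, ((L * f t) ^ μ * R ^ (-lam)) ^ β
      = (L ^ (1 - μ) * R ^ (-lam * β)) * ∫ t in s, f t ^ (1 - μ) := by
    rw [integral_congr_ae hae_r]; exact integral_const_mul _ _
  -- Step 6 : key scalar inequality
  have he : 0 ≤ β - (1 - μ) := by
    rw [hβdef, sub_nonneg, le_div_iff₀ hμ0]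
    nlinarith
  have hkey : c ^ (1 - μ) * R ^ (lam * (1 - μ) + -lam * β) ≤ c ^ β := by
    have h4 : (1:ℝ) ≤ c ^ (β - (1 - μ)) * R ^ (lam * (β - (1 - μ))) := by
      calc (1:ℝ) = 1 ^ (β - (1 - μ)) := (Real.one_rpow _).symm
        _ ≤ (c * R ^ lam) ^ (β - (1 - μ)) := Real.rpow_le_rpow zero_le_one h1 he
        _ = c ^ (β - (1 - μ)) * R ^ (lam * (β - (1 - μ))) := by
            rw [Real.mul_rpow hc.le (Real.rpow_nonneg hR.le _), ← Real.rpow_mul hR.le]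
    have hpos : (0:ℝ) < c ^ (1 - μ) * R ^ (lam * (1 - μ) + -lam * β) := by positivity
    have e1 : (1 - μ) + (β - (1 - μ)) = β := by ring
    have e2 : (lam * (1 - μ) + -lam * β) + lam * (β - (1 - μ)) = 0 := by ring
    calc c ^ (1 - μ) * R ^ (lam * (1 - μ) + -lam * β)
        ≤ (c ^ (1 - μ) * R ^ (lam * (1 - μ) + -lam * β))
            * (c ^ (β - (1 - μ)) * R ^ (lam * (β - (1 - μ)))) :=
          le_mul_of_one_le_right hpos.le h4
      _ = (c ^ (1 - μ) * c ^ (β - (1 - μ)))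
            * (R ^ (lam * (1 - μ) + -lam * β) * R ^ (lam * (β - (1 - μ)))) := by ring
      _ = c ^ β := by
          rw [← Real.rpow_add hc, ← Real.rpow_add hR, e1, e2, Real.rpow_zero, mul_one]
  -- Step 7 : combine
  rw [ge_iff_le]
  apply mul_le_mul_of_nonneg_left _ (by positivity : (0:ℝ) ≤ 1 / T)
  have hLpow : (0:ℝ) < L ^ (1 - μ) := Real.rpow_pos_of_pos hL _
  calc ∫ t in s, ((L * f t) ^ μ * R ^ (-lam)) ^ β
      = (L ^ (1 - μ) * R ^ (-lam * β)) * ∫ t in s, f t ^ (1 - μ) := hRHS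
    _ ≤ (L ^ (1 - μ) * R ^ (-lam * β)) * (T * (c * L⁻¹ * R ^ lam) ^ (1 - μ)) :=
        mul_le_mul_of_nonneg_left hJ (by positivity)
    _ = T * (c ^ (1 - μ) * R ^ (lam * (1 - μ) + -lam * β)) := by
        rw [Real.mul_rpow (by positivity : (0:ℝ) ≤ c * L⁻¹) (Real.rpow_nonneg hR.le _),
          Real.mul_rpow hc.le (by positivity : (0:ℝ) ≤ L⁻¹),
          ← Real.rpow_mul hR.le, Real.inv_rpow hL.le, Real.rpow_add hR]
        field_simp
    _ ≤ T * c ^ β := mul_le_mul_of_nonneg_left hkey hT.le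
    _ ≤ ∫ t in s, (c * g t / f t) ^ β := hLHS
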